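/- Let C be an n×n real positive definite matrix, φ > 0 and f ∈ ℝⁿ. Then (1/2)[log det(I + φ⁻¹C) + φ · tr((C + φI)⁻¹) − n + fᵀ(C + φI)⁻¹f] ≤ (1/2) fᵀ C⁻¹ f + (1/2) log det(I + φ⁻¹C). The left-hand side equals the Kullback–Leibler divergence KL(N(f, φI) ‖ N(0, C + φI)) between two n-dimensional Gaussians, so this KL divergence is bounded by half the RKHS-norm term fᵀC⁻¹f plus half the regret term log det(I + φ⁻¹C). -/

import Mathlib

open Matrix

section Aux

variable {n : ℕ}

private lemma aux_smul_posDef {M : Matrix (Fin n) (Fin n) ℝ} (hM : M.PosDef) {c : ℝ}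
    (hc : 0 < c) : (c • M).PosDef := by
  refine Matrix.PosDef.of_dotProduct_mulVec_pos ?_ fun x hx => ?_
  · rw [Matrix.IsHermitian, Matrix.conjTranspose_smul, star_trivial, hM.1.eq]
  · rw [smul_mulVec, dotProduct_smul, smul_eq_mul]
    have := hM.dotProduct_mulVec_pos hx
    rw [star_trivial] at this
    exact mul_pos hc this

private lemma aux_trace_nonneg {M : Matrix (Fin n) (Fin n) ℝ} (hM : M.PosSemidef) :
    0 ≤ M.trace := by
  rw [Matrix.trace]
  refine Finset.sum_nonneg fun i _ => ?_
  have := hM.dotProduct_mulVec_nonneg (Pi.single i 1)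
  simpa using this

end Aux

/-- The finite-dimensional core of the information consistency theorem: the
Kullback–Leibler divergence `KL(N(f, φI) ‖ N(0, C + φI))`, which equals
`(1/2)[log det(I + φ⁻¹C) + φ tr((C + φI)⁻¹) − n + fᵀ(C + φI)⁻¹f]`, is bounded by half the
RKHS-norm term `fᵀC⁻¹f` plus half the regret term `log det(I + φ⁻¹C)`. -/
theorem kl_gaussian_bound_rkhs_plus_regret
    (n : ℕ) (C : Matrix (Fin n) (Fin n) ℝ) (hC : C.PosDef)
    (φ : ℝ) (hφ : 0 < φ) (f : Fin n → ℝ) :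
    (1/2) * (Real.log ((1 + φ⁻¹ • C : Matrix (Fin n) (Fin n) ℝ).det)
        + φ * ((C + φ • (1 : Matrix (Fin n) (Fin n) ℝ))⁻¹).trace - (n : ℝ)
        + f ⬝ᵥ ((C + φ • (1 : Matrix (Fin n) (Fin n) ℝ))⁻¹ *ᵥ f)) ≤
      (1/2) * (f ⬝ᵥ (C⁻¹ *ᵥ f))
        + (1/2) * Real.log ((1 + φ⁻¹ • C : Matrix (Fin n) (Fin n) ℝ).det) := by
  set A : Matrix (Fin n) (Fin n) ℝ := C + φ • (1 : Matrix (Fin n) (Fin n) ℝ) with hAdef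
  have hsm1 : ((φ : ℝ) • (1 : Matrix (Fin n) (Fin n) ℝ)).PosDef :=
    aux_smul_posDef Matrix.PosDef.one hφ
  have hA : A.PosDef := hC.add hsm1
  have hAd : IsUnit A.det := hA.det_pos.ne'.isUnit
  have hCd : IsUnit C.det := hC.det_pos.ne'.isUnit
  -- positive definiteness of 1 + φ • C⁻¹ = C⁻¹ * A, hence of its inverse A⁻¹ * C
  have hCinvA : C⁻¹ * A = 1 + φ • C⁻¹ := by
    rw [hAdef, Matrix.mul_add, Matrix.nonsing_inv_mul _ hCd, Matrix.mul_smul, Matrix.mul_one]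
  have hPD1 : (C⁻¹ * A).PosDef := by
    rw [hCinvA]
    exact Matrix.PosDef.one.add (aux_smul_posDef hC.inv hφ)
  have hAinvC : (C⁻¹ * A)⁻¹ = A⁻¹ * C := by
    rw [Matrix.mul_inv_rev, Matrix.nonsing_inv_nonsing_inv _ hCd]
  have hPD2 : (A⁻¹ * C).PosDef := hAinvC ▸ hPD1.inv
  -- trace bound
  have hId : (1 : Matrix (Fin n) (Fin n) ℝ) - φ • A⁻¹ = A⁻¹ * C := by
    have hC' : C = A - φ • (1 : Matrix (Fin n) (Fin n) ℝ) := by rw [hAdef]; abel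
    rw [hC', Matrix.mul_sub, Matrix.nonsing_inv_mul _ hAd, Matrix.mul_smul, Matrix.mul_one]
  have htr : φ * A⁻¹.trace ≤ (n : ℝ) := by
    have h0 : 0 ≤ (A⁻¹ * C).trace := aux_trace_nonneg hPD2.posSemidef
    rw [← hId, Matrix.trace_sub, Matrix.trace_smul, Matrix.trace_one] at h0
    simp only [smul_eq_mul, Fintype.card_fin] at h0
    linarith
  -- quadratic form bound
  have hCA : (C * A).PosDef := by
    refine Matrix.PosDef.of_dotProduct_mulVec_pos ?_ fun x hx => ?_
    · have h1 : (C * A).IsHermitian := by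
        rw [Matrix.IsHermitian, Matrix.conjTranspose_mul, hC.1.eq, hA.1.eq, hAdef]
        rw [Matrix.add_mul, Matrix.mul_add, Matrix.smul_mul, Matrix.mul_smul,
          Matrix.one_mul, Matrix.mul_one]
      exact h1
    · rw [hAdef, Matrix.mul_add, Matrix.add_mulVec, dotProduct_add]
      have hq1 : 0 ≤ star x ⬝ᵥ ((C * C) *ᵥ x) := by
        have := (Matrix.posSemidef_conjTranspose_mul_self C).dotProduct_mulVec_nonneg x
        rwa [hC.1.eq] at this
      have hq2 : 0 < star x ⬝ᵥ ((C * (φ • (1 : Matrix (Fin n) (Fin n) ℝ))) *ᵥ x) := by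
        rw [Matrix.mul_smul, Matrix.mul_one]
        exact (aux_smul_posDef hC hφ).dotProduct_mulVec_pos hx
      linarith
  have hAC' : (C * A)⁻¹ = A⁻¹ * C⁻¹ := Matrix.mul_inv_rev C A
  have hPD3 : (A⁻¹ * C⁻¹).PosDef := hAC' ▸ hCA.inv
  have hdiff : C⁻¹ - A⁻¹ = φ • (A⁻¹ * C⁻¹) := by
    have h1 : C⁻¹ - A⁻¹ = A⁻¹ * (A - C) * C⁻¹ := by
      rw [Matrix.mul_sub, Matrix.nonsing_inv_mul _ hAd, Matrix.sub_mul, Matrix.one_mul,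
        Matrix.mul_assoc, Matrix.mul_nonsing_inv _ hCd, Matrix.mul_one]
    have h2 : A - C = φ • (1 : Matrix (Fin n) (Fin n) ℝ) := by rw [hAdef]; abel
    rw [h1, h2, Matrix.mul_smul, Matrix.mul_one, Matrix.smul_mul]
  have hquad : f ⬝ᵥ (A⁻¹ *ᵥ f) ≤ f ⬝ᵥ (C⁻¹ *ᵥ f) := by
    have h0 : 0 ≤ star f ⬝ᵥ ((φ • (A⁻¹ * C⁻¹)) *ᵥ f) := by
      rw [smul_mulVec, dotProduct_smul, smul_eq_mul]
      exact mul_nonneg hφ.le (hPD3.posSemidef.dotProduct_mulVec_nonneg f)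
    rw [← hdiff, Matrix.sub_mulVec, dotProduct_sub, star_trivial] at h0
    linarith
  linarith
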